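/- Let M be an n×n matrix over ℚ[t,t⁻¹] such that every entry of M is a nonzero Laurent polynomial with positive coefficients, and suppose some entry of M has spread at least one. Then there exists k ≥ 1 such that every entry of M^k has spread at least one. -/

import Mathlib

noncomputable def spread (p : LaurentPolynomial ℚ) : ℤ :=
  p.coeff.support.max.unbotD 0 - p.coeff.support.min.untopD 0

def PosCoeffs (p : LaurentPolynomial ℚ) : Prop := ∀ m ∈ p.coeff.support, 0 < p.coeff m

namespace SpreadAux

def Nonneg (p : LaurentPolynomial ℚ) : Prop := ∀ m, 0 ≤ p.coeff m

lemma pos_iff {p : LaurentPolynomial ℚ} : PosCoeffs p ↔ Nonneg p := by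
  constructor
  · intro h m
    by_cases hm : m ∈ p.coeff.support
    · exact (h m hm).le
    · simp [Finsupp.notMem_support_iff.mp hm]
  · intro h m hm
    exact lt_of_le_of_ne (h m) (Ne.symm (Finsupp.mem_support_iff.mp hm))

lemma nonneg_mul {p q : LaurentPolynomial ℚ} (hp : Nonneg p) (hq : Nonneg q) :
    Nonneg (p * q) := by
  intro m
  rw [AddMonoidAlgebra.mul_apply]
  apply Finset.sum_nonneg
  intro a _
  apply Finset.sum_nonneg
  intro b _
  beta_reduce
  split
  · exact mul_nonneg (hp a) (hq b)
  · exact le_refl 0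

lemma mul_apply_pos {p q : LaurentPolynomial ℚ} {a b : ℤ} (hp : Nonneg p) (hq : Nonneg q)
    (ha : 0 < p.coeff a) (hb : 0 < q.coeff b) : 0 < (p * q).coeff (a + b) := by
  rw [AddMonoidAlgebra.mul_apply]
  apply Finset.sum_pos'
  · intro x _
    apply Finset.sum_nonneg
    intro y _
    beta_reduce
    split
    · exact mul_nonneg (hp x) (hq y)
    · exact le_refl 0
  · refine ⟨a, Finsupp.mem_support_iff.mpr (ne_of_gt ha), ?_⟩
    apply Finset.sum_pos'
    · intro y _
      beta_reduce
      split
      · exact mul_nonneg (hp a) (hq y)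
      · exact le_refl 0
    · refine ⟨b, Finsupp.mem_support_iff.mpr (ne_of_gt hb), ?_⟩
      beta_reduce
      simp only [if_pos rfl]
      exact mul_pos ha hb

lemma matrix_nonneg_mul {n : ℕ} {A B : Matrix (Fin n) (Fin n) (LaurentPolynomial ℚ)}
    (hA : ∀ i j, Nonneg (A i j)) (hB : ∀ i j, Nonneg (B i j)) :
    ∀ i j, Nonneg ((A * B) i j) := by
  intro i j m
  rw [Matrix.mul_apply, AddMonoidAlgebra.coeff_sum, Finsupp.finset_sum_apply]
  apply Finset.sum_nonneg
  intro l _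
  exact nonneg_mul (hA i l) (hB l j) m

lemma matrix_mul_apply_pos {n : ℕ} {A B : Matrix (Fin n) (Fin n) (LaurentPolynomial ℚ)}
    (hA : ∀ i j, Nonneg (A i j)) (hB : ∀ i j, Nonneg (B i j))
    {i l j : Fin n} {m : ℤ} (h : 0 < (A i l * B l j).coeff m) : 0 < ((A * B) i j).coeff m := by
  rw [Matrix.mul_apply, AddMonoidAlgebra.coeff_sum, Finsupp.finset_sum_apply]
  apply Finset.sum_pos'
  · intro l' _
    exact nonneg_mul (hA i l') (hB l' j) m
  · exact ⟨l, Finset.mem_univ l, h⟩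

lemma one_le_spread_of {p : LaurentPolynomial ℚ} {a b : ℤ} (ha : a ∈ p.coeff.support)
    (hb : b ∈ p.coeff.support) (hab : a + 1 ≤ b) : 1 ≤ spread p := by
  obtain ⟨Mx, hMx⟩ := Finset.max_of_mem hb
  obtain ⟨mx, hmx⟩ := Finset.min_of_mem ha
  have h1 : b ≤ Mx := by
    have := Finset.le_max hb
    rw [hMx] at this
    exact_mod_cast this
  have h2 : mx ≤ a := by
    have := Finset.min_le ha
    rw [hmx] at this
    exact_mod_cast this
  unfold spread
  rw [hMx, hmx]
  simp only [WithBot.unbotD_coe, WithTop.untopD_coe]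
  omega

lemma exists_two_of_spread {p : LaurentPolynomial ℚ} (hp : p ≠ 0) (hs : 1 ≤ spread p) :
    ∃ a ∈ p.coeff.support, ∃ b ∈ p.coeff.support, a + 1 ≤ b := by
  have hne : p.coeff.support.Nonempty := Finsupp.support_nonempty_iff.mpr (AddMonoidAlgebra.coeff_eq_zero.not.mpr hp)
  refine ⟨p.coeff.support.min' hne, Finset.min'_mem _ _, p.coeff.support.max' hne, Finset.max'_mem _ _, ?_⟩
  have h1 : p.coeff.support.max = (p.coeff.support.max' hne : WithBot ℤ) := (Finset.coe_max' hne).symm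
  have h2 : p.coeff.support.min = (p.coeff.support.min' hne : WithTop ℤ) := (Finset.coe_min' hne).symm
  unfold spread at hs
  rw [h1, h2] at hs
  simp only [WithBot.unbotD_coe, WithTop.untopD_coe] at hs
  omega

end SpreadAux

theorem stmt_4 (n : ℕ) (M : Matrix (Fin n) (Fin n) (LaurentPolynomial ℚ))
    (h0 : ∀ i j, M i j ≠ 0) (hpos : ∀ i j, PosCoeffs (M i j))
    (hspread : ∃ i j, 1 ≤ spread (M i j)) :
    ∃ k : ℕ, 1 ≤ k ∧ ∀ i j, 1 ≤ spread ((M ^ k) i j) := by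
  open SpreadAux in
  obtain ⟨i0, j0, hs⟩ := hspread
  obtain ⟨a, ha, b, hb, hab⟩ := exists_two_of_spread (h0 i0 j0) hs
  have hnn : ∀ i j, Nonneg (M i j) := fun i j => pos_iff.mp (hpos i j)
  have hnn2 : ∀ i j, Nonneg ((M * M) i j) := matrix_nonneg_mul hnn hnn
  refine ⟨3, by norm_num, fun i j => ?_⟩
  have hM3 : M ^ 3 = M * M * M := by rw [pow_succ, pow_succ, pow_one]
  -- pick support points in M i i0 and M j0 j
  obtain ⟨c, hc⟩ := Finsupp.support_nonempty_iff.mpr (AddMonoidAlgebra.coeff_eq_zero.not.mpr (h0 i i0))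
  obtain ⟨d, hd⟩ := Finsupp.support_nonempty_iff.mpr (AddMonoidAlgebra.coeff_eq_zero.not.mpr (h0 j0 j))
  have hcpos : 0 < (M i i0).coeff c := hpos i i0 c hc
  have hdpos : 0 < (M j0 j).coeff d := hpos j0 j d hd
  have hapos : 0 < (M i0 j0).coeff a := hpos i0 j0 a ha
  have hbpos : 0 < (M i0 j0).coeff b := hpos i0 j0 b hb
  have key : ∀ x : ℤ, 0 < (M i0 j0).coeff x → 0 < ((M ^ 3) i j).coeff (c + x + d) := by
    intro x hx
    rw [hM3]
    have h1 : 0 < ((M * M) i j0).coeff (c + x) :=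
      matrix_mul_apply_pos hnn hnn (mul_apply_pos (hnn i i0) (hnn i0 j0) hcpos hx)
    exact matrix_mul_apply_pos hnn2 hnn
      (mul_apply_pos (hnn2 i j0) (hnn j0 j) h1 hdpos)
  exact one_le_spread_of
    (Finsupp.mem_support_iff.mpr (ne_of_gt (key a hapos)))
    (Finsupp.mem_support_iff.mpr (ne_of_gt (key b hbpos)))
    (by omega)
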